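/- Let K be a linearly ordered field and let H be a finite-dimensional K-vector space with a positive definite symmetric bilinear form B such that every one-dimensional subspace of H contains a unit vector. For nonzero x, y ∈ H, write ⟨x⟩ ≈ ⟨y⟩ if there exist medial vectors x' ∈ ⟨x⟩ and y' ∈ ⟨y⟩ such that x' − y' is infinitesimal. Then: (a) ≈ is a well-defined equivalence relation on the set P(H) of one-dimensional subspaces of H; (b) if ⟨x⟩ ≈ ⟨y⟩ then B(x,y) ≠ 0; (c) for every orthogonal operator U of (H,B) and all nonzero x, y ∈ H, ⟨x⟩ ≈ ⟨y⟩ if and only if ⟨Ux⟩ ≈ ⟨Uy⟩; (d) if K contains a nonzero infinitesimal element and dim H ≥ 2, then there exist distinct one-dimensional subspaces of H that are ≈-equivalent. -/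

import Mathlib

section Holland

variable (K : Type*) [Field K] [LinearOrder K] [IsStrictOrderedRing K]

/-- An element of an ordered field is infinitesimal if its absolute value is
smaller than `1/n` for every positive integer `n`. -/
def Infinitesimal (α : K) : Prop := ∀ n : ℕ, 0 < n → |α| < 1 / (n : K)

/-- An element of an ordered field is medial if `1/n < |α| < n` for some
positive integer `n`. -/
def Medial (α : K) : Prop := ∃ n : ℕ, 0 < n ∧ 1 / (n : K) < |α| ∧ |α| < (n : K)

variable (H : Type*) [AddCommGroup H] [Module K H] (B : H → H → K)

/-- A vector is infinitesimal if its squared length is infinitesimal. -/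
def InfVec (x : H) : Prop := Infinitesimal K (B x x)

/-- A vector is medial if its squared length is medial. -/
def MedVec (x : H) : Prop := Medial K (B x x)

/-- `⟨x⟩ ≈ ⟨y⟩`: there are medial vectors `x' ∈ ⟨x⟩` and `y' ∈ ⟨y⟩` whose
difference is infinitesimal. -/
def ApproxRel (x y : H) : Prop :=
  ∃ x' ∈ Submodule.span K ({x} : Set H), ∃ y' ∈ Submodule.span K ({y} : Set H),
    MedVec K H B x' ∧ MedVec K H B y' ∧ InfVec K H B (x' - y')

end Holland

section Aux
variable {K : Type*} [Field K] [LinearOrder K] [IsStrictOrderedRing K]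

lemma aux_inf_zero : Infinitesimal K  0 := by
  intro n hn
  simp only [abs_zero]
  positivity

lemma aux_inf_neg {a : K} (h : Infinitesimal K  a) : Infinitesimal K  (-a) := by
  intro n hn; simpa [abs_neg] using h n hn

lemma aux_inf_add {a b : K} (ha : Infinitesimal K  a) (hb : Infinitesimal K  b) :
    Infinitesimal K  (a + b) := by
  intro n hn
  have h1 := ha (2 * n) (by omega)
  have h2 := hb (2 * n) (by omega)
  have hn' : (0 : K) < n := by exact_mod_cast hn
  have hne : (n:K) ≠ 0 := ne_of_gt hn'
  have key : 1 / ((2 * n : ℕ) : K) + 1 / ((2 * n : ℕ) : K) = 1 / (n : K) := by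
    have h2n : ((2*n:ℕ):K) = 2*(n:K) := by push_cast; ring
    rw [h2n, ← add_div, show ((1:K)+1)=2 by norm_num,
      div_eq_div_iff (by positivity) hne]
    ring
  calc |a + b| ≤ |a| + |b| := abs_add_le _ _
    _ < 1 / ((2 * n : ℕ) : K) + 1 / ((2 * n : ℕ) : K) := by linarith
    _ = 1 / (n : K) := key

lemma aux_med_ne_zero {a : K} (h : Medial K  a) : a ≠ 0 := by
  obtain ⟨n, hn, h1, _⟩ := h
  intro h0
  rw [h0, abs_zero] at h1
  have : (0:K) < n := by exact_mod_cast hn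
  have : (0:K) < 1 / (n:K) := by positivity
  linarith

lemma aux_med_mul {a b : K} (ha : Medial K  a) (hb : Medial K  b) : Medial K  (a * b) := by
  obtain ⟨m, hm, hm1, hm2⟩ := ha
  obtain ⟨n, hn, hn1, hn2⟩ := hb
  refine ⟨m * n, by positivity, ?_, ?_⟩
  · have hmK : (0:K) < m := by exact_mod_cast hm
    have hnK : (0:K) < n := by exact_mod_cast hn
    have h1 : (1:K) / ((m*n : ℕ) : K) = (1/(m:K)) * (1/(n:K)) := by
      push_cast; rw [div_mul_div_comm]; ring_nf
    rw [h1, abs_mul]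
    have ha0 : (0:K) < 1/(m:K) := by positivity
    exact mul_lt_mul'' hm1 hn1 (le_of_lt ha0) (by positivity)
  · rw [abs_mul]
    push_cast
    exact mul_lt_mul'' hm2 hn2 (abs_nonneg a) (abs_nonneg b)

lemma aux_med_inv {a : K} (ha : Medial K  a) : Medial K  a⁻¹ := by
  obtain ⟨n, hn, h1, h2⟩ := ha
  have hnK : (0:K) < n := by exact_mod_cast hn
  have ha0 : (0:K) < |a| := lt_trans (by positivity) h1
  refine ⟨n, hn, ?_, ?_⟩
  · rw [abs_inv, inv_eq_one_div]
    exact one_div_lt_one_div_of_lt ha0 h2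
  · rw [abs_inv]
    have : (n:K)⁻¹ < |a| := by rwa [inv_eq_one_div]
    calc |a|⁻¹ < ((n:K)⁻¹)⁻¹ := by
          exact inv_strictAnti₀ (by positivity) this
      _ = (n:K) := inv_inv _
  
lemma aux_med_div {a b : K} (ha : Medial K  a) (hb : Medial K  b) : Medial K  (a / b) := by
  rw [div_eq_mul_inv]; exact aux_med_mul ha (aux_med_inv hb)

lemma aux_med_mul_inf {c a : K} (hc : Medial K  c) (ha : Infinitesimal K  a) :
    Infinitesimal K  (c * a) := by
  obtain ⟨m, hm, _, hm2⟩ := hc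
  intro n hn
  have h1 := ha (m * n) (by positivity)
  have hmK : (0:K) < m := by exact_mod_cast hm
  have hnK : (0:K) < n := by exact_mod_cast hn
  have key : (m:K) * (1 / ((m*n : ℕ) : K)) = 1 / (n:K) := by
    push_cast; field_simp
  rw [abs_mul]
  calc |c| * |a| ≤ (m:K) * |a| := by
        exact mul_le_mul_of_nonneg_right (le_of_lt hm2) (abs_nonneg a)
    _ < (m:K) * (1 / ((m*n : ℕ) : K)) := by
        exact mul_lt_mul_of_pos_left h1 hmK
    _ = 1 / (n:K) := key

lemma aux_med_one : Medial K  (1 : K) := by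
  refine ⟨2, by norm_num, ?_, ?_⟩ <;> norm_num

end Aux

section Bil
variable {K : Type*} [Field K] [LinearOrder K] [IsStrictOrderedRing K] {H : Type*} [AddCommGroup H] [Module K H]
variable {B : H → H → K}
variable (hadd : ∀ u v w : H, B (u + v) w = B u w + B v w)
variable (hsmul : ∀ (a : K) (u v : H), B (a • u) v = a * B u v)
variable (hsymm : ∀ u v : H, B u v = B v u)

include hadd hsmul hsymm

lemma aux_zero_left (w : H) : B 0 w = 0 := by
  have h := hadd 0 0 w
  simp only [add_zero] at h
  linarith

lemma aux_zero_right (w : H) : B w 0 = 0 := by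
  rw [hsymm]; exact aux_zero_left hadd hsmul hsymm w

lemma aux_smul_right (a : K) (u v : H) : B u (a • v) = a * B u v := by
  rw [hsymm, hsmul, hsymm]

lemma aux_add_right (u v w : H) : B u (v + w) = B u v + B u w := by
  rw [hsymm, hadd, hsymm v u, hsymm w u]

lemma aux_neg_left (u v : H) : B (-u) v = - B u v := by
  rw [← neg_one_smul K u, hsmul]; ring

lemma aux_sub_left (u v w : H) : B (u - v) w = B u w - B v w := by
  rw [sub_eq_add_neg, hadd, aux_neg_left hadd hsmul hsymm]; ring

lemma aux_sub_right (u v w : H) : B u (v - w) = B u v - B u w := by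
  rw [hsymm, aux_sub_left hadd hsmul hsymm, hsymm v u, hsymm w u]

lemma aux_expand (a b : K) (u v : H) :
    B (a • u - b • v) (a • u - b • v)
      = a * a * B u u - 2 * (a * b) * B u v + b * b * B v v := by
  simp only [aux_sub_left hadd hsmul hsymm, aux_sub_right hadd hsmul hsymm, hsmul,
    aux_smul_right hadd hsmul hsymm]
  rw [hsymm v u]
  ring

lemma aux_expand_sub (u v : H) :
    B (u - v) (u - v) = B u u - 2 * B u v + B v v := by
  have h := aux_expand hadd hsmul hsymm 1 1 u v
  simpa using h

lemma aux_expand_add (u v : H) :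
    B (u + v) (u + v) = B u u + 2 * B u v + B v v := by
  rw [hadd, aux_add_right hadd hsmul hsymm, aux_add_right hadd hsmul hsymm, hsymm v u]
  ring

variable (hpos : ∀ v : H, v ≠ 0 → 0 < B v v)
include hpos

lemma aux_self_nonneg (v : H) : 0 ≤ B v v := by
  by_cases h : v = 0
  · rw [h, aux_zero_left hadd hsmul hsymm]
  · exact le_of_lt (hpos v h)

lemma aux_CS (u v : H) : (B u v) ^ 2 ≤ B u u * B v v := by
  by_cases hv : v = 0
  · rw [hv, aux_zero_right hadd hsmul hsymm, aux_zero_right hadd hsmul hsymm]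
    norm_num
  · have hq : 0 < B v v := hpos v hv
    have h0 : 0 ≤ B ((B v v) • u - (B u v) • v) ((B v v) • u - (B u v) • v) :=
      aux_self_nonneg hadd hsmul hsymm hpos _
    rw [aux_expand hadd hsmul hsymm] at h0
    nlinarith [h0, hq]

end Bil

/-- Properties of the relation `≈` on `P(H)` for a finite
dimensional positive definite quadratic space over a linearly ordered field
possessing unit vectors in every one-dimensional subspace: (a) `≈` is a
well-defined equivalence relation on `P(H)`; (b) `≈`-related subspaces are
non-orthogonal; (c) `≈` is invariant under orthogonal operators; (d) if `K`
contains a nonzero infinitesimal and `dim H ≥ 2`, then `≈` is non-trivial. -/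
theorem stmt18 (K : Type*) [Field K] [LinearOrder K] [IsStrictOrderedRing K]
    (H : Type*) [AddCommGroup H] [Module K H] [FiniteDimensional K H]
    (B : H → H → K)
    (hadd_left : ∀ u v w : H, B (u + v) w = B u w + B v w)
    (hsmul_left : ∀ (a : K) (u v : H), B (a • u) v = a * B u v)
    (hsymmB : ∀ u v : H, B u v = B v u)
    (hposdef : ∀ v : H, v ≠ 0 → 0 < B v v)
    (hunit : ∀ v : H, v ≠ 0 → ∃ u ∈ Submodule.span K ({v} : Set H), B u u = 1) :
    -- (a) `≈` is well defined on one-dimensional subspaces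
    (∀ x₁ x₂ y₁ y₂ : H, x₁ ≠ 0 → x₂ ≠ 0 → y₁ ≠ 0 → y₂ ≠ 0 →
      Submodule.span K ({x₁} : Set H) = Submodule.span K ({x₂} : Set H) →
      Submodule.span K ({y₁} : Set H) = Submodule.span K ({y₂} : Set H) →
      (ApproxRel K H B x₁ y₁ ↔ ApproxRel K H B x₂ y₂)) ∧
    -- (a) `≈` is reflexive, symmetric and transitive on nonzero vectors
    (∀ x : H, x ≠ 0 → ApproxRel K H B x x) ∧
    (∀ x y : H, x ≠ 0 → y ≠ 0 → ApproxRel K H B x y → ApproxRel K H B y x) ∧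
    (∀ x y z : H, x ≠ 0 → y ≠ 0 → z ≠ 0 →
      ApproxRel K H B x y → ApproxRel K H B y z → ApproxRel K H B x z) ∧
    -- (b) `≈`-related subspaces are non-orthogonal
    (∀ x y : H, x ≠ 0 → y ≠ 0 → ApproxRel K H B x y → B x y ≠ 0) ∧
    -- (c) `≈` is invariant under orthogonal operators
    (∀ U : H ≃ₗ[K] H, (∀ a b : H, B (U a) (U b) = B a b) →
      ∀ x y : H, x ≠ 0 → y ≠ 0 →
        (ApproxRel K H B x y ↔ ApproxRel K H B (U x) (U y))) ∧
    -- (d) a nonzero infinitesimal scalar yields distinct `≈`-related subspaces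
    ((∃ δ : K, δ ≠ 0 ∧ Infinitesimal K δ) → 2 ≤ Module.finrank K H →
      ∃ x y : H, x ≠ 0 ∧ y ≠ 0 ∧
        Submodule.span K ({x} : Set H) ≠ Submodule.span K ({y} : Set H) ∧
        ApproxRel K H B x y) := by
  -- abbreviations for the bilinear-form lemmas
  have hzl := aux_zero_left hadd_left hsmul_left hsymmB
  have hzr := aux_zero_right hadd_left hsmul_left hsymmB
  have hsr := aux_smul_right hadd_left hsmul_left hsymmB
  have har := aux_add_right hadd_left hsmul_left hsymmB
  have hsubr := aux_sub_right hadd_left hsmul_left hsymmB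
  have hexps := aux_expand_sub hadd_left hsmul_left hsymmB
  have hexpa := aux_expand_add hadd_left hsmul_left hsymmB
  have hnn := aux_self_nonneg hadd_left hsmul_left hsymmB hposdef
  have hCS := aux_CS hadd_left hsmul_left hsymmB hposdef
  -- B of a pair of infinitesimal vectors is infinitesimal
  have hinfB : ∀ u v : H, InfVec K H B u → InfVec K H B v → Infinitesimal K (B u v) := by
    intro u v hu hv n hn
    have h1 := hu n hn
    have h2 := hv n hn
    have hcs := hCS u v
    have h3 := hnn u
    have h4 := hnn v
    rw [abs_of_nonneg h3] at h1
    rw [abs_of_nonneg h4] at h2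
    have hnpos : (0:K) < (n:K) := by exact_mod_cast hn
    by_contra hcon
    push_neg at hcon
    have habs : (0:K) ≤ |B u v| := abs_nonneg _
    have hsq : |B u v| ^ 2 = (B u v) ^ 2 := sq_abs _
    nlinarith [hcon, hsq, hcs, h1, h2, h3, h4]
  -- sums of infinitesimal vectors
  have hivadd : ∀ u v : H, InfVec K H B u → InfVec K H B v → InfVec K H B (u + v) := by
    intro u v hu hv
    show Infinitesimal K (B (u+v) (u+v))
    rw [hexpa u v]
    refine aux_inf_add (aux_inf_add hu ?_) hv
    have h2 : Medial K (2 : K) := by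
      refine ⟨3, by norm_num, ?_, ?_⟩
      · rw [show |(2:K)| = 2 by rw [abs_of_pos]; norm_num]
        push_cast
        norm_num
      · rw [show |(2:K)| = 2 by rw [abs_of_pos]; norm_num]
        push_cast
        norm_num
    exact aux_med_mul_inf h2 (hinfB u v hu hv)
  -- medial vectors are nonzero
  have hmv0 : ∀ u : H, MedVec K H B u → u ≠ 0 := by
    intro u hm h0
    have := aux_med_ne_zero hm
    apply this
    rw [h0]
    exact hzl 0
  refine ⟨?_, ?_, ?_, ?_, ?_, ?_, ?_⟩
  · -- well-definedness
    intro x₁ x₂ y₁ y₂ _ _ _ _ hx hy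
    unfold ApproxRel
    rw [hx, hy]
  · -- reflexivity
    intro x hx
    obtain ⟨u, hu, huu⟩ := hunit x hx
    refine ⟨u, hu, u, hu, ?_, ?_, ?_⟩
    · show Medial K (B u u); rw [huu]; exact aux_med_one
    · show Medial K (B u u); rw [huu]; exact aux_med_one
    · show Infinitesimal K (B (u - u) (u - u))
      rw [sub_self, hzl]
      exact aux_inf_zero
  · -- symmetry
    rintro x y hx hy ⟨x', hx', y', hy', hmx, hmy, hi⟩
    refine ⟨y', hy', x', hx', hmy, hmx, ?_⟩
    show Infinitesimal K (B (y' - x') (y' - x'))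
    have h : B (y' - x') (y' - x') = B (x' - y') (x' - y') := by
      rw [hexps, hexps, hsymmB y' x']; ring
    rw [h]
    exact hi
  · -- transitivity
    rintro x y z hx hy hz ⟨x₁, hx₁, y₁, hy₁, hmx₁, hmy₁, hi₁⟩ ⟨y₂, hy₂, z₂, hz₂, hmy₂, hmz₂, hi₂⟩
    have hy₁0 : y₁ ≠ 0 := hmv0 y₁ hmy₁
    obtain ⟨a, ha⟩ := Submodule.mem_span_singleton.mp hy₁
    obtain ⟨b, hb⟩ := Submodule.mem_span_singleton.mp hy₂
    have ha0 : a ≠ 0 := by rintro rfl; rw [zero_smul] at ha; exact hy₁0 ha.symm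
    set c := b / a with hcdef
    have hc : c • y₁ = y₂ := by
      rw [← ha, ← hb, smul_smul, hcdef, div_mul_cancel₀ _ ha0]
    have hc2 : B y₂ y₂ = (c * c) * B y₁ y₁ := by
      rw [← hc, hsmul_left, hsr]; ring
    have hBy₁ne : B y₁ y₁ ≠ 0 := aux_med_ne_zero hmy₁
    have hccmed : Medial K (c * c) := by
      have hcc : c * c = B y₂ y₂ / B y₁ y₁ := by rw [hc2]; field_simp
      rw [hcc]
      exact aux_med_div hmy₂ hmy₁
    refine ⟨c • x₁, Submodule.smul_mem _ c hx₁, z₂, hz₂, ?_, hmz₂, ?_⟩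
    · show Medial K (B (c • x₁) (c • x₁))
      rw [hsmul_left, hsr, show c * (c * B x₁ x₁) = (c*c) * B x₁ x₁ by ring]
      exact aux_med_mul hccmed hmx₁
    · have heq : c • x₁ - z₂ = c • (x₁ - y₁) + (y₂ - z₂) := by
        rw [smul_sub, ← hc]; abel
      rw [show InfVec K H B (c • x₁ - z₂) = InfVec K H B (c • (x₁ - y₁) + (y₂ - z₂)) from by rw [heq]]
      refine hivadd _ _ ?_ hi₂
      show Infinitesimal K (B (c • (x₁ - y₁)) (c • (x₁ - y₁)))
      rw [hsmul_left, hsr, show c * (c * B (x₁ - y₁) (x₁ - y₁)) = (c*c) * B (x₁ - y₁) (x₁ - y₁) by ring]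
      exact aux_med_mul_inf hccmed hi₁
  · -- (b) non-orthogonality
    rintro x y hx hy ⟨x', hx', y', hy', hmx, hmy, hi⟩ h0
    obtain ⟨a, ha⟩ := Submodule.mem_span_singleton.mp hx'
    obtain ⟨b, hb⟩ := Submodule.mem_span_singleton.mp hy'
    have hxy' : B x' y' = 0 := by
      rw [← ha, ← hb, hsmul_left, hsr, h0]; ring
    obtain ⟨n, hn, h1, _⟩ := hmx
    have h2 := hi n hn
    have hval : B (x' - y') (x' - y') = B x' x' + B y' y' := by
      rw [hexps, hxy']; ring
    have h3 := hnn x'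
    have h4 := hnn y'
    rw [abs_of_nonneg h3] at h1
    rw [hval] at h2
    have h5 : B x' x' + B y' y' ≤ |B x' x' + B y' y'| := le_abs_self _
    linarith
  · -- (c) invariance under orthogonal operators
    have hfwd : ∀ (U : H ≃ₗ[K] H), (∀ a b : H, B (U a) (U b) = B a b) →
        ∀ x y : H, ApproxRel K H B x y → ApproxRel K H B (U x) (U y) := by
      rintro U hU x y ⟨x', hx', y', hy', hmx, hmy, hi⟩
      have hmap : ∀ v w : H, w ∈ Submodule.span K ({v} : Set H) →
          U w ∈ Submodule.span K ({U v} : Set H) := by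
        intro v w hw
        obtain ⟨a, ha⟩ := Submodule.mem_span_singleton.mp hw
        exact Submodule.mem_span_singleton.mpr ⟨a, by rw [← ha, map_smul]⟩
      refine ⟨U x', hmap x x' hx', U y', hmap y y' hy', ?_, ?_, ?_⟩
      · show Medial K (B (U x') (U x')); rw [hU]; exact hmx
      · show Medial K (B (U y') (U y')); rw [hU]; exact hmy
      · show Infinitesimal K (B (U x' - U y') (U x' - U y'))
        rw [← map_sub, hU]
        exact hi
    intro U hU x y hx hy
    constructor
    · exact hfwd U hU x y
    · intro h
      have hU' : ∀ a b : H, B (U.symm a) (U.symm b) = B a b := by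
        intro a b
        conv_rhs => rw [← U.apply_symm_apply a, ← U.apply_symm_apply b]
        exact (hU _ _).symm
      have := hfwd U.symm hU' (U x) (U y) h
      simpa using this
  · -- (d) nontriviality
    rintro ⟨δ, hδ0, hδinf⟩ hdim
    have hδ1 : |δ| < 1 := by
      have := hδinf 1 (by norm_num)
      simpa using this
    have hpos' : 0 < Module.finrank K H := by omega
    have : Nontrivial H := Module.nontrivial_of_finrank_pos hpos'
    obtain ⟨v, hv⟩ := exists_ne (0 : H)
    obtain ⟨e₁, he₁mem, he₁⟩ := hunit v hv
    have he₁0 : e₁ ≠ 0 := by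
      intro h
      rw [h, hzl] at he₁
      exact one_ne_zero he₁.symm
    have hne_top : Submodule.span K ({e₁} : Set H) ≠ ⊤ := by
      intro htop
      have h1 : Module.finrank K (Submodule.span K ({e₁} : Set H)) = 1 :=
        finrank_span_singleton he₁0
      rw [htop, finrank_top] at h1
      omega
    have hexw : ∃ w, w ∉ Submodule.span K ({e₁} : Set H) := by
      by_contra hcon
      push_neg at hcon
      exact hne_top (Submodule.eq_top_iff'.mpr hcon)
    obtain ⟨w, hw⟩ := hexw
    set f := w - (B e₁ w) • e₁ with hfdef
    have hf0 : f ≠ 0 := by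
      intro h
      apply hw
      have hweq : w = (B e₁ w) • e₁ := by rwa [sub_eq_zero] at h
      rw [hweq]
      exact Submodule.smul_mem _ _ (Submodule.mem_span_singleton_self e₁)
    have hBe₁f : B e₁ f = 0 := by
      rw [hfdef, hsubr, hsr, he₁]; ring
    obtain ⟨e₂, he₂mem, he₂⟩ := hunit f hf0
    have hBe₁e₂ : B e₁ e₂ = 0 := by
      obtain ⟨ce, hce⟩ := Submodule.mem_span_singleton.mp he₂mem
      rw [← hce, hsr, hBe₁f]; ring
    set y := e₁ + δ • e₂ with hydef
    have hByy : B y y = 1 + δ * δ := by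
      rw [hydef, hexpa, hsr, hBe₁e₂, hsmul_left, hsr, he₂, he₁]; ring
    have hy0 : y ≠ 0 := by
      intro h
      rw [h, hzl] at hByy
      nlinarith [mul_self_nonneg δ]
    refine ⟨e₁, y, he₁0, hy0, ?_, ?_⟩
    · intro hsp
      have hymem : y ∈ Submodule.span K ({e₁} : Set H) := by
        rw [hsp]
        exact Submodule.mem_span_singleton_self y
      obtain ⟨a, ha⟩ := Submodule.mem_span_singleton.mp hymem
      have h1 : B e₂ y = δ := by
        rw [hydef, har, hsr, he₂, hsymmB e₂ e₁, hBe₁e₂]; ring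
      have h2 : B e₂ y = 0 := by
        rw [← ha, hsr, hsymmB e₂ e₁, hBe₁e₂]; ring
      exact hδ0 (by rw [← h1, h2])
    · refine ⟨e₁, Submodule.mem_span_singleton_self e₁, y,
        Submodule.mem_span_singleton_self y, ?_, ?_, ?_⟩
      · show Medial K (B e₁ e₁); rw [he₁]; exact aux_med_one
      · show Medial K (B y y)
        rw [hByy]
        have hδsq : δ * δ < 1 := by
          have h := abs_mul_abs_self δ
          nlinarith [abs_nonneg δ]
        have hδsq0 : 0 ≤ δ * δ := mul_self_nonneg δ
        refine ⟨2, by norm_num, ?_, ?_⟩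
        · rw [abs_of_pos (by linarith)]
          push_cast
          linarith
        · rw [abs_of_pos (by linarith)]
          push_cast
          linarith
      · show Infinitesimal K (B (e₁ - y) (e₁ - y))
        have h : e₁ - y = (-δ) • e₂ := by
          rw [neg_smul, hydef]
          abel
        rw [h, hsmul_left, hsr, he₂]
        intro n hn
        have h1 := hδinf n hn
        rw [show (-δ) * ((-δ) * 1) = δ * δ by ring, abs_mul]
        calc |δ| * |δ| ≤ 1 * |δ| := mul_le_mul_of_nonneg_right (le_of_lt hδ1) (abs_nonneg δ)
          _ = |δ| := one_mul _
          _ < 1 / (n : K) := h1
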